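/- Let Λ ≥ λ > 0, ω = Λ/λ, γ > 0. Define u^ω_γ on the square S = [-(1+√ω)π/2, (1+√ω)π/2]² piecewise by: u = γ·cos x + cos y if |x|,|y| ≤ π/2; u = -γ√ω·sin((|x|-π/2)/√ω) + cos y if π/2 < |x|, |y| ≤ π/2; u = γ·cos x - √ω·sin((|y|-π/2)/√ω) if |x| ≤ π/2 < |y|; u = -√ω·(γ·sin((|x|-π/2)/√ω) + sin((|y|-π/2)/√ω)) if π/2 < |x| and π/2 < |y|. Then u^ω_γ extends to a C² function on all of ℝ² which is periodic with period (1+√ω)·π in both x and y, and satisfies M⁺(D²u^ω_γ) + λ·u^ω_γ = 0 everywhere in ℝ². -/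

import Mathlib

open Real

noncomputable def pucci (lam Lam α β δ : ℝ) : ℝ :=
  (lam * min ((α + δ) / 2 + Real.sqrt (((α - δ) / 2) ^ 2 + β ^ 2)) 0
    + Lam * max ((α + δ) / 2 + Real.sqrt (((α - δ) / 2) ^ 2 + β ^ 2)) 0)
  + (lam * min ((α + δ) / 2 - Real.sqrt (((α - δ) / 2) ^ 2 + β ^ 2)) 0
    + Lam * max ((α + δ) / 2 - Real.sqrt (((α - δ) / 2) ^ 2 + β ^ 2)) 0)

noncomputable def pxx (u : ℝ → ℝ → ℝ) (x y : ℝ) : ℝ :=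
  deriv (fun t => deriv (fun s => u s y) t) x

noncomputable def pyy (u : ℝ → ℝ → ℝ) (x y : ℝ) : ℝ :=
  deriv (fun t => deriv (fun s => u x s) t) y

noncomputable def pxy (u : ℝ → ℝ → ℝ) (x y : ℝ) : ℝ :=
  deriv (fun t => deriv (fun s => u s t) x) y

/-- The piecewise definition of `u^ω_γ` on the square `[-(1+√ω)π/2, (1+√ω)π/2]²`. -/
noncomputable def uPer (om ga x y : ℝ) : ℝ :=
  if |x| ≤ π / 2 then
    (if |y| ≤ π / 2 then ga * Real.cos x + Real.cos y
     else ga * Real.cos x - Real.sqrt om * Real.sin ((|y| - π / 2) / Real.sqrt om))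
  else
    (if |y| ≤ π / 2 then
      -(ga * Real.sqrt om) * Real.sin ((|x| - π / 2) / Real.sqrt om) + Real.cos y
     else
      -Real.sqrt om * (ga * Real.sin ((|x| - π / 2) / Real.sqrt om)
        + Real.sin ((|y| - π / 2) / Real.sqrt om)))


open Set Filter Topology

namespace Stmt12Aux

noncomputable def Pp (s : ℝ) : ℝ := (1 + s) * π

noncomputable def per (s t : ℝ) : ℝ := t - Pp s * ⌊(t + π / 2) / Pp s⌋

noncomputable def fb (s t : ℝ) : ℝ :=
  if t ≤ π / 2 then Real.cos t else -s * Real.sin ((t - π / 2) / s)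

noncomputable def ff (s t : ℝ) : ℝ := fb s (per s t)

noncomputable def f1b (s t : ℝ) : ℝ :=
  if t ≤ π / 2 then -Real.sin t else -Real.cos ((t - π / 2) / s)

noncomputable def ff1 (s t : ℝ) : ℝ := f1b s (per s t)

noncomputable def f2b (s t : ℝ) : ℝ :=
  if t ≤ π / 2 then -Real.cos t else (1 / s) * Real.sin ((t - π / 2) / s)

noncomputable def ff2 (s t : ℝ) : ℝ := f2b s (per s t)

variable {s : ℝ}

lemma hP (hs : 0 < s) : 0 < Pp s := by
  have := Real.pi_pos; unfold Pp; nlinarith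

lemma per_mem (hs : 0 < s) (t : ℝ) : per s t ∈ Ico (-(π/2)) (Pp s - π/2) := by
  have hp := hP hs
  have h1 : (⌊(t + π / 2) / Pp s⌋ : ℝ) * Pp s ≤ t + π / 2 :=
    (le_div_iff₀ hp).mp (Int.floor_le _)
  have h2 : t + π / 2 < ((⌊(t + π / 2) / Pp s⌋ : ℝ) + 1) * Pp s :=
    (div_lt_iff₀ hp).mp (Int.lt_floor_add_one _)
  unfold per
  constructor
  · nlinarith
  · nlinarith

lemma per_eq_self (hs : 0 < s) {t : ℝ} (ht : t ∈ Ico (-(π/2)) (Pp s - π/2)) :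
    per s t = t := by
  have hp := hP hs
  have h0 : ⌊(t + π / 2) / Pp s⌋ = 0 := by
    rw [Int.floor_eq_zero_iff]
    constructor
    · exact div_nonneg (by linarith [ht.1]) hp.le
    · rw [div_lt_one hp]; linarith [ht.2]
  unfold per; rw [h0]; simp

lemma per_add_int (hs : 0 < s) (n : ℤ) (t : ℝ) :
    per s (t + n * Pp s) = per s t := by
  have hp := (hP hs).ne'
  unfold per
  have h : (t + n * Pp s + π / 2) / Pp s = (t + π / 2) / Pp s + n := by
    field_simp
    ring
  rw [h, Int.floor_add_intCast]
  push_cast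
  ring

lemma per_eq_add (hs : 0 < s) {t : ℝ} (ht : t ∈ Ico (-(π/2) - s*π) (-(π/2))) :
    per s t = t + Pp s := by
  have hpi := Real.pi_pos
  have h1 : per s (t + Pp s) = t + Pp s := by
    apply per_eq_self hs
    constructor
    · unfold Pp; nlinarith [ht.1]
    · linarith [ht.2]
  have h2 := per_add_int hs (-1) (t + Pp s)
  have h3 : t + Pp s + ((-1 : ℤ) : ℝ) * Pp s = t := by push_cast; ring
  rw [h3, h1] at h2
  exact h2

lemma ff_eq_cos (hs : 0 < s) {t : ℝ} (ht : t ∈ Icc (-(π/2)) (π/2)) :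
    ff s t = Real.cos t := by
  have hpi := Real.pi_pos
  have hper : per s t = t := per_eq_self hs ⟨ht.1, by unfold Pp; nlinarith [ht.2]⟩
  unfold ff fb
  rw [hper, if_pos ht.2]

lemma ff1_eq_cos (hs : 0 < s) {t : ℝ} (ht : t ∈ Icc (-(π/2)) (π/2)) :
    ff1 s t = -Real.sin t := by
  have hpi := Real.pi_pos
  have hper : per s t = t := per_eq_self hs ⟨ht.1, by unfold Pp; nlinarith [ht.2]⟩
  unfold ff1 f1b
  rw [hper, if_pos ht.2]

lemma ff_eq_g2 (hs : 0 < s) {t : ℝ} (ht : t ∈ Ico (π/2) (Pp s - π/2)) :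
    ff s t = -s * Real.sin ((t - π/2)/s) := by
  have hpi := Real.pi_pos
  have hper : per s t = t := per_eq_self hs ⟨by linarith [ht.1], ht.2⟩
  unfold ff fb
  rw [hper]
  rcases eq_or_lt_of_le ht.1 with h | h
  · rw [if_pos h.symm.le, ← h]
    simp
  · rw [if_neg (not_le.mpr h)]

lemma ff1_eq_g2 (hs : 0 < s) {t : ℝ} (ht : t ∈ Ico (π/2) (Pp s - π/2)) :
    ff1 s t = -Real.cos ((t - π/2)/s) := by
  have hpi := Real.pi_pos
  have hper : per s t = t := per_eq_self hs ⟨by linarith [ht.1], ht.2⟩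
  unfold ff1 f1b
  rw [hper]
  rcases eq_or_lt_of_le ht.1 with h | h
  · rw [if_pos h.symm.le, ← h]
    simp
  · rw [if_neg (not_le.mpr h)]

lemma ff_eq_g0 (hs : 0 < s) {t : ℝ} (ht : t ∈ Ioc (-(π/2) - s*π) (-(π/2))) :
    ff s t = s * Real.sin ((t + π/2)/s) := by
  have hpi := Real.pi_pos
  rcases eq_or_lt_of_le ht.2 with h | h
  · rw [h]
    have h1 : ff s (-(π/2)) = Real.cos (-(π/2)) :=
      ff_eq_cos hs ⟨le_rfl, by linarith⟩
    rw [h1]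
    simp
  · have hper : per s t = t + Pp s := per_eq_add hs ⟨ht.1.le, h⟩
    unfold ff fb
    rw [hper]
    by_cases hb : t + Pp s ≤ π/2
    · have hb' : t + Pp s = π/2 := le_antisymm hb (by unfold Pp; nlinarith [ht.1])
      rw [if_pos hb, hb']
      have harg : (t + π/2)/s = -π := by
        have : t = π/2 - Pp s := by linarith
        rw [this]; unfold Pp; field_simp; ring
      rw [harg]
      simp
    · rw [if_neg hb]
      have harg : (t + Pp s - π/2)/s = (t + π/2)/s + π := by
        unfold Pp; field_simp; ring
      rw [harg, Real.sin_add_pi]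
      ring

lemma ff1_eq_g0 (hs : 0 < s) {t : ℝ} (ht : t ∈ Ioc (-(π/2) - s*π) (-(π/2))) :
    ff1 s t = Real.cos ((t + π/2)/s) := by
  have hpi := Real.pi_pos
  rcases eq_or_lt_of_le ht.2 with h | h
  · rw [h]
    have h1 : ff1 s (-(π/2)) = -Real.sin (-(π/2)) :=
      ff1_eq_cos hs ⟨le_rfl, by linarith⟩
    rw [h1]
    simp
  · have hper : per s t = t + Pp s := per_eq_add hs ⟨ht.1.le, h⟩
    unfold ff1 f1b
    rw [hper]
    by_cases hb : t + Pp s ≤ π/2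
    · have hb' : t + Pp s = π/2 := le_antisymm hb (by unfold Pp; nlinarith [ht.1])
      rw [if_pos hb, hb']
      have harg : (t + π/2)/s = -π := by
        have : t = π/2 - Pp s := by linarith
        rw [this]; unfold Pp; field_simp; ring
      rw [harg]
      simp
    · rw [if_neg hb]
      have harg : (t + Pp s - π/2)/s = (t + π/2)/s + π := by
        unfold Pp; field_simp; ring
      rw [harg, Real.cos_add_pi]
      ring

lemma glue {f g h : ℝ → ℝ} {b d : ℝ}
    (hg : HasDerivAt g d b) (hh : HasDerivAt h d b)
    (hfg : ∀ᶠ u in nhdsWithin b (Set.Iic b), f u = g u)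
    (hfh : ∀ᶠ u in nhdsWithin b (Set.Ici b), f u = h u) :
    HasDerivAt f d b := by
  have hb1 : f b = g b := hfg.self_of_nhdsWithin (Set.mem_Iic.mpr le_rfl)
  have hb2 : f b = h b := hfh.self_of_nhdsWithin (Set.mem_Ici.mpr le_rfl)
  have h1 : HasDerivWithinAt f d (Set.Iic b) b :=
    (hg.hasDerivWithinAt).congr_of_eventuallyEq hfg hb1
  have h2 : HasDerivWithinAt f d (Set.Ici b) b :=
    (hh.hasDerivWithinAt).congr_of_eventuallyEq hfh hb2
  have h3 := h1.union h2
  rwa [Set.Iic_union_Ici, hasDerivWithinAt_univ] at h3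

lemma shift {g : ℝ → ℝ} {d t c : ℝ} (h : HasDerivAt g d t)
    (hper : ∀ u, g (u + c) = g u) : HasDerivAt g d (t + c) := by
  have hin : HasDerivAt (fun u : ℝ => u - c) 1 (t + c) := (hasDerivAt_id _).sub_const c
  have h' : HasDerivAt g d ((fun u : ℝ => u - c) (t + c)) := by
    simpa using h
  have h1 := h'.comp (t + c) hin
  have heq : (fun u => g (u - c)) = g := by
    funext u
    have h2 := hper (u - c)
    rw [sub_add_cancel] at h2
    exact h2.symm
  rw [show g ∘ (fun u : ℝ => u - c) = fun u => g (u - c) from rfl, heq] at h1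
  simpa using h1

lemma hd_g2 (hs : 0 < s) (t : ℝ) :
    HasDerivAt (fun u => -s * Real.sin ((u - π/2)/s)) (-Real.cos ((t - π/2)/s)) t := by
  have h1 : HasDerivAt (fun u : ℝ => (u - π/2)/s) (1/s) t := by
    simpa using ((hasDerivAt_id t).sub_const (π/2)).div_const s
  have h2 := (Real.hasDerivAt_sin ((t - π/2)/s)).comp t h1
  have h3 := h2.const_mul (-s)
  refine h3.congr_deriv ?_
  field_simp

lemma hd_g2' (hs : 0 < s) (t : ℝ) :
    HasDerivAt (fun u => -Real.cos ((u - π/2)/s)) ((1/s) * Real.sin ((t - π/2)/s)) t := by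
  have h1 : HasDerivAt (fun u : ℝ => (u - π/2)/s) (1/s) t := by
    simpa using ((hasDerivAt_id t).sub_const (π/2)).div_const s
  have h2 := ((Real.hasDerivAt_cos ((t - π/2)/s)).comp t h1).neg
  refine h2.congr_deriv ?_
  ring

lemma hd_g0 (hs : 0 < s) (t : ℝ) :
    HasDerivAt (fun u => s * Real.sin ((u + π/2)/s)) (Real.cos ((t + π/2)/s)) t := by
  have h1 : HasDerivAt (fun u : ℝ => (u + π/2)/s) (1/s) t := by
    simpa using ((hasDerivAt_id t).add_const (π/2)).div_const s
  have h2 := ((Real.hasDerivAt_sin ((t + π/2)/s)).comp t h1).const_mul s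
  refine h2.congr_deriv ?_
  field_simp

lemma hd_g0' (hs : 0 < s) (t : ℝ) :
    HasDerivAt (fun u => Real.cos ((u + π/2)/s)) (-(1/s) * Real.sin ((t + π/2)/s)) t := by
  have h1 : HasDerivAt (fun u : ℝ => (u + π/2)/s) (1/s) t := by
    simpa using ((hasDerivAt_id t).add_const (π/2)).div_const s
  have h2 := (Real.hasDerivAt_cos ((t + π/2)/s)).comp t h1
  refine h2.congr_deriv ?_
  ring

lemma pi_half_lt (hs : 0 < s) : π/2 < Pp s - π/2 := by
  have := Real.pi_pos; unfold Pp; nlinarith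

lemma hd_ff_junc_neg (hs : 0 < s) : HasDerivAt (ff s) 1 (-(π/2)) := by
  have hpi := Real.pi_pos
  have hsp : 0 < s * π := mul_pos hs hpi
  apply glue (g := fun u => s * Real.sin ((u + π/2)/s)) (h := Real.cos)
  · have := hd_g0 hs (-(π/2))
    simpa using this
  · have := Real.hasDerivAt_cos (-(π/2))
    simpa using this
  · filter_upwards [Ioc_mem_nhdsLE
      (show -(π/2) ∈ Ioc (-(π/2) - s*π) (-(π/2)) from ⟨by linarith, le_rfl⟩).1] with u hu
    exact ff_eq_g0 hs hu
  · filter_upwards [Ico_mem_nhdsGE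
      (show -(π/2) ∈ Ico (-(π/2)) (π/2) from ⟨le_rfl, by linarith⟩).2] with u hu
    exact ff_eq_cos hs ⟨hu.1, hu.2.le⟩

lemma hd_ff_junc_pos (hs : 0 < s) : HasDerivAt (ff s) (-1) (π/2) := by
  have hpi := Real.pi_pos
  apply glue (g := Real.cos) (h := fun u => -s * Real.sin ((u - π/2)/s))
  · have := Real.hasDerivAt_cos (π/2)
    simpa using this
  · have := hd_g2 hs (π/2)
    simpa using this
  · filter_upwards [Ioc_mem_nhdsLE
      (show π/2 ∈ Ioc (-(π/2)) (π/2) from ⟨by linarith, le_rfl⟩).1] with u hu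
    exact ff_eq_cos hs ⟨hu.1.le, hu.2⟩
  · filter_upwards [Ico_mem_nhdsGE
      (show π/2 ∈ Ico (π/2) (Pp s - π/2) from ⟨le_rfl, pi_half_lt hs⟩).2] with u hu
    exact ff_eq_g2 hs hu

lemma hd_ff1_junc_neg (hs : 0 < s) : HasDerivAt (ff1 s) 0 (-(π/2)) := by
  have hpi := Real.pi_pos
  have hsp : 0 < s * π := mul_pos hs hpi
  apply glue (g := fun u => Real.cos ((u + π/2)/s)) (h := fun u => -Real.sin u)
  · have := hd_g0' hs (-(π/2))
    simpa using this
  · have := (Real.hasDerivAt_sin (-(π/2))).neg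
    exact this.congr_deriv (by simp)
  · filter_upwards [Ioc_mem_nhdsLE
      (show -(π/2) ∈ Ioc (-(π/2) - s*π) (-(π/2)) from ⟨by linarith, le_rfl⟩).1] with u hu
    exact ff1_eq_g0 hs hu
  · filter_upwards [Ico_mem_nhdsGE
      (show -(π/2) ∈ Ico (-(π/2)) (π/2) from ⟨le_rfl, by linarith⟩).2] with u hu
    exact ff1_eq_cos hs ⟨hu.1, hu.2.le⟩

lemma hd_ff1_junc_pos (hs : 0 < s) : HasDerivAt (ff1 s) 0 (π/2) := by
  have hpi := Real.pi_pos
  apply glue (g := fun u => -Real.sin u) (h := fun u => -Real.cos ((u - π/2)/s))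
  · have := (Real.hasDerivAt_sin (π/2)).neg
    exact this.congr_deriv (by simp)
  · have := hd_g2' hs (π/2)
    simpa using this
  · filter_upwards [Ioc_mem_nhdsLE
      (show π/2 ∈ Ioc (-(π/2)) (π/2) from ⟨by linarith, le_rfl⟩).1] with u hu
    exact ff1_eq_cos hs ⟨hu.1.le, hu.2⟩
  · filter_upwards [Ico_mem_nhdsGE
      (show π/2 ∈ Ico (π/2) (Pp s - π/2) from ⟨le_rfl, pi_half_lt hs⟩).2] with u hu
    exact ff1_eq_g2 hs hu

lemma hd_ff_fund (hs : 0 < s) {t : ℝ} (ht : t ∈ Ico (-(π/2)) (Pp s - π/2)) :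
    HasDerivAt (ff s) (ff1 s t) t := by
  have hpi := Real.pi_pos
  rcases lt_trichotomy t (π/2) with h | h | h
  · rcases eq_or_lt_of_le ht.1 with h0 | h0
    · rw [ff1_eq_cos hs ⟨ht.1, h.le⟩, ← h0]
      simpa using hd_ff_junc_neg hs
    · rw [ff1_eq_cos hs ⟨ht.1, h.le⟩]
      have heq : ∀ᶠ u in nhds t, ff s u = Real.cos u := by
        filter_upwards [Ioo_mem_nhds h0 h] with u hu
        exact ff_eq_cos hs ⟨hu.1.le, hu.2.le⟩
      exact (Real.hasDerivAt_cos t).congr_of_eventuallyEq heq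
  · rw [ff1_eq_cos hs ⟨by linarith, h.le⟩, h]
    simpa using hd_ff_junc_pos hs
  · rw [ff1_eq_g2 hs ⟨h.le, ht.2⟩]
    have heq : ∀ᶠ u in nhds t, ff s u = -s * Real.sin ((u - π/2)/s) := by
      filter_upwards [Ioo_mem_nhds h ht.2] with u hu
      exact ff_eq_g2 hs ⟨hu.1.le, hu.2⟩
    exact (hd_g2 hs t).congr_of_eventuallyEq heq

lemma ff2_eq_cos (hs : 0 < s) {t : ℝ} (ht : t ∈ Icc (-(π/2)) (π/2)) :
    ff2 s t = -Real.cos t := by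
  have hpi := Real.pi_pos
  have hper : per s t = t := per_eq_self hs ⟨ht.1, by unfold Pp; nlinarith [ht.2]⟩
  unfold ff2 f2b
  rw [hper, if_pos ht.2]

lemma ff2_eq_g2 (hs : 0 < s) {t : ℝ} (ht : t ∈ Ico (π/2) (Pp s - π/2)) :
    ff2 s t = (1/s) * Real.sin ((t - π/2)/s) := by
  have hpi := Real.pi_pos
  have hper : per s t = t := per_eq_self hs ⟨by linarith [ht.1], ht.2⟩
  unfold ff2 f2b
  rw [hper]
  rcases eq_or_lt_of_le ht.1 with h | h
  · rw [if_pos h.symm.le, ← h]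
    simp
  · rw [if_neg (not_le.mpr h)]

lemma hd_ff1_fund (hs : 0 < s) {t : ℝ} (ht : t ∈ Ico (-(π/2)) (Pp s - π/2)) :
    HasDerivAt (ff1 s) (ff2 s t) t := by
  have hpi := Real.pi_pos
  rcases lt_trichotomy t (π/2) with h | h | h
  · rcases eq_or_lt_of_le ht.1 with h0 | h0
    · rw [ff2_eq_cos hs ⟨ht.1, h.le⟩, ← h0]
      simpa using hd_ff1_junc_neg hs
    · rw [ff2_eq_cos hs ⟨ht.1, h.le⟩]
      have heq : ∀ᶠ u in nhds t, ff1 s u = -Real.sin u := by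
        filter_upwards [Ioo_mem_nhds h0 h] with u hu
        exact ff1_eq_cos hs ⟨hu.1.le, hu.2.le⟩
      exact ((Real.hasDerivAt_sin t).neg).congr_of_eventuallyEq heq
  · rw [ff2_eq_cos hs ⟨by linarith, h.le⟩, h]
    have h0 := hd_ff1_junc_pos hs
    have : -Real.cos (π/2) = 0 := by simp
    rw [this]
    exact h0
  · rw [ff2_eq_g2 hs ⟨h.le, ht.2⟩]
    have heq : ∀ᶠ u in nhds t, ff1 s u = -Real.cos ((u - π/2)/s) := by
      filter_upwards [Ioo_mem_nhds h ht.2] with u hu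
      exact ff1_eq_g2 hs ⟨hu.1.le, hu.2⟩
    exact (hd_g2' hs t).congr_of_eventuallyEq heq

lemma hd_ff (hs : 0 < s) (t : ℝ) : HasDerivAt (ff s) (ff1 s t) t := by
  have hmem := per_mem hs t
  have h0 : HasDerivAt (ff s) (ff1 s (per s t)) (per s t) := hd_ff_fund hs hmem
  have hperiodic : ∀ u, ff s (u + (⌊(t + π / 2) / Pp s⌋ : ℝ) * Pp s) = ff s u := by
    intro u
    unfold ff
    rw [per_add_int hs]
  have h1 := shift h0 hperiodic
  have h2 : per s t + (⌊(t + π / 2) / Pp s⌋ : ℝ) * Pp s = t := by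
    unfold per; ring
  have h3 : ff1 s (per s t) = ff1 s t := by
    unfold ff1
    rw [per_eq_self hs hmem]
  rw [h2, h3] at h1
  exact h1

lemma hd_ff1 (hs : 0 < s) (t : ℝ) : HasDerivAt (ff1 s) (ff2 s t) t := by
  have hmem := per_mem hs t
  have h0 : HasDerivAt (ff1 s) (ff2 s (per s t)) (per s t) := hd_ff1_fund hs hmem
  have hperiodic : ∀ u, ff1 s (u + (⌊(t + π / 2) / Pp s⌋ : ℝ) * Pp s) = ff1 s u := by
    intro u
    unfold ff1
    rw [per_add_int hs]
  have h1 := shift h0 hperiodic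
  have h2 : per s t + (⌊(t + π / 2) / Pp s⌋ : ℝ) * Pp s = t := by
    unfold per; ring
  have h3 : ff2 s (per s t) = ff2 s t := by
    unfold ff2
    rw [per_eq_self hs hmem]
  rw [h2, h3] at h1
  exact h1

lemma ff2_ident (hs : 0 < s) (t : ℝ) :
    ff2 s t = -max (ff s t) 0 - min (ff s t) 0 / s^2 := by
  have hpi := Real.pi_pos
  have hmem := per_mem hs t
  have hper : per s (per s t) = per s t := per_eq_self hs hmem
  unfold ff2 ff f2b fb
  by_cases h : per s t ≤ π/2
  · rw [if_pos h, if_pos h]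
    have hc : 0 ≤ Real.cos (per s t) := Real.cos_nonneg_of_mem_Icc ⟨hmem.1, h⟩
    rw [max_eq_left hc, min_eq_right hc]
    simp
  · rw [if_neg h, if_neg h]
    push_neg at h
    have hθ1 : 0 ≤ (per s t - π/2)/s := div_nonneg (by linarith) hs.le
    have hθ2 : (per s t - π/2)/s ≤ π := by
      rw [div_le_iff₀ hs]
      have h2 := hmem.2
      unfold Pp at h2
      nlinarith
    have hsin : 0 ≤ Real.sin ((per s t - π/2)/s) :=
      Real.sin_nonneg_of_nonneg_of_le_pi hθ1 hθ2
    have hf : -s * Real.sin ((per s t - π/2)/s) ≤ 0 := by nlinarith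
    rw [max_eq_right hf, min_eq_left hf]
    field_simp
    ring

lemma cont_ff2 (hs : 0 < s) : Continuous (ff2 s) := by
  have hcf : Continuous (ff s) := by
    rw [continuous_iff_continuousAt]
    exact fun t => (hd_ff hs t).continuousAt
  have heq : ff2 s = fun t => -max (ff s t) 0 - min (ff s t) 0 / s^2 :=
    funext (ff2_ident hs)
  rw [heq]
  exact ((hcf.max continuous_const).neg).sub ((hcf.min continuous_const).div_const _)

lemma contDiff_ff (hs : 0 < s) : ContDiff ℝ 2 (ff s) := by
  have hdf : deriv (ff s) = ff1 s := funext fun t => (hd_ff hs t).deriv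
  have hdf1 : deriv (ff1 s) = ff2 s := funext fun t => (hd_ff1 hs t).deriv
  have h1 : ContDiff ℝ 1 (ff1 s) := by
    rw [contDiff_one_iff_deriv]
    exact ⟨fun t => (hd_ff1 hs t).differentiableAt, by rw [hdf1]; exact cont_ff2 hs⟩
  have h2 : ContDiff ℝ (1 + 1) (ff s) := by
    rw [contDiff_succ_iff_deriv]
    refine ⟨fun t => (hd_ff hs t).differentiableAt, ?_, by rw [hdf]; exact h1⟩
    intro hh
    exact absurd hh (by norm_num)
  have : ((2 : ℕ) : WithTop ℕ∞) = 1 + 1 := by norm_num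
  rw [show ((2 : ℕ) : WithTop ℕ∞) = 2 from rfl] at this
  exact this ▸ h2

lemma ff_form (hs : 0 < s) {t : ℝ} (ht : |t| ≤ Pp s / 2) :
    ff s t = if |t| ≤ π/2 then Real.cos t else -s * Real.sin ((|t| - π/2)/s) := by
  have hpi := Real.pi_pos
  have hsp : 0 < s * π := mul_pos hs hpi
  by_cases h : |t| ≤ π/2
  · rw [if_pos h]
    exact ff_eq_cos hs (abs_le.mp h)
  · rw [if_neg h]
    push_neg at h
    rcases le_or_gt 0 t with h0 | h0
    · rw [abs_of_nonneg h0] at h ht ⊢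
      apply ff_eq_g2 hs
      refine ⟨h.le, ?_⟩
      unfold Pp at ht ⊢
      nlinarith
    · rw [abs_of_neg h0] at h ht ⊢
      have hmem : t ∈ Ioc (-(π/2) - s*π) (-(π/2)) := by
        constructor
        · unfold Pp at ht; nlinarith
        · linarith
      rw [ff_eq_g0 hs hmem]
      have harg : (-t - π/2)/s = -((t + π/2)/s) := by ring
      rw [harg, Real.sin_neg]
      ring

lemma periodic_ff (hs : 0 < s) (u : ℝ) : ff s (u + (1 + s) * π) = ff s u := by
  unfold ff
  rw [show u + (1 + s) * π = u + ((1 : ℤ) : ℝ) * Pp s by push_cast; unfold Pp; ring,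
    per_add_int hs]

lemma pucci_diag (lam Lam a d : ℝ) :
    pucci lam Lam a 0 d =
      (lam * min a 0 + Lam * max a 0) + (lam * min d 0 + Lam * max d 0) := by
  unfold pucci
  have hsq : Real.sqrt (((a - d) / 2) ^ 2 + 0 ^ 2) = |(a - d) / 2| := by
    rw [show ((0:ℝ)) ^ 2 = 0 by norm_num, add_zero, Real.sqrt_sq_eq_abs]
  rw [hsq]
  rcases le_total d a with h | h
  · rw [abs_of_nonneg (by linarith : (0:ℝ) ≤ (a - d) / 2)]
    rw [show (a + d) / 2 + (a - d) / 2 = a by ring, show (a + d) / 2 - (a - d) / 2 = d by ring]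
  · rw [abs_of_nonpos (by linarith : (a - d) / 2 ≤ (0:ℝ))]
    rw [show (a + d) / 2 + -((a - d) / 2) = d by ring,
      show (a + d) / 2 - -((a - d) / 2) = a by ring]
    ring

end Stmt12Aux


/-- For `Λ ≥ λ > 0`, `ω = Λ/λ`, `γ > 0`, the piecewise function `u^ω_γ` extends to a `C²`
function on `ℝ²`, periodic of period `(1+√ω)·π` in both variables, which satisfies
`M⁺(D²u^ω_γ) + λ·u^ω_γ = 0` everywhere in `ℝ²`. -/
theorem stmt12 (lam Lam om ga : ℝ) (hlam : 0 < lam) (hLam : lam ≤ Lam)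
    (hom : om = Lam / lam) (hga : 0 < ga) :
    ∃ U : ℝ → ℝ → ℝ,
      ContDiff ℝ 2 (fun p : ℝ × ℝ => U p.1 p.2) ∧
      (∀ x y : ℝ, U (x + (1 + Real.sqrt om) * π) y = U x y) ∧
      (∀ x y : ℝ, U x (y + (1 + Real.sqrt om) * π) = U x y) ∧
      (∀ x y : ℝ, |x| ≤ (1 + Real.sqrt om) * π / 2 → |y| ≤ (1 + Real.sqrt om) * π / 2 →
        U x y = uPer om ga x y) ∧
      (∀ x y : ℝ,
        pucci lam Lam (pxx U x y) (pxy U x y) (pyy U x y) + lam * U x y = 0) := by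
  classical
  have hLam0 : 0 < Lam := lt_of_lt_of_le hlam hLam
  have hompos : 0 < om := by rw [hom]; positivity
  set s : ℝ := Real.sqrt om with hsdef
  have hs : 0 < s := Real.sqrt_pos.mpr hompos
  have hs2 : s ^ 2 = om := Real.sq_sqrt hompos.le
  refine ⟨fun x y => ga * Stmt12Aux.ff s x + Stmt12Aux.ff s y, ?_, ?_, ?_, ?_, ?_⟩
  · -- smoothness
    have hC := Stmt12Aux.contDiff_ff hs
    exact (contDiff_const.mul (hC.comp contDiff_fst)).add (hC.comp contDiff_snd)
  · intro x y
    simp only [Stmt12Aux.periodic_ff hs]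
  · intro x y
    simp only [Stmt12Aux.periodic_ff hs]
  · intro x y hx hy
    have hx' : |x| ≤ Stmt12Aux.Pp s / 2 := by unfold Stmt12Aux.Pp; linarith
    have hy' : |y| ≤ Stmt12Aux.Pp s / 2 := by unfold Stmt12Aux.Pp; linarith
    have hxf := Stmt12Aux.ff_form hs hx'
    have hyf := Stmt12Aux.ff_form hs hy'
    unfold uPer
    rw [← hsdef]
    simp only [hxf, hyf]
    by_cases h1 : |x| ≤ π / 2 <;> by_cases h2 : |y| ≤ π / 2 <;>
      simp only [h1, h2, if_true, if_false, if_pos, if_neg, not_false_iff] <;> ring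
  · intro x y
    have hd1 := Stmt12Aux.hd_ff hs
    have hd2 := Stmt12Aux.hd_ff1 hs
    have hpxx : pxx (fun x y => ga * Stmt12Aux.ff s x + Stmt12Aux.ff s y) x y
        = ga * Stmt12Aux.ff2 s x := by
      unfold pxx
      have h1 : (fun t => deriv (fun u => ga * Stmt12Aux.ff s u + Stmt12Aux.ff s y) t)
          = fun t => ga * Stmt12Aux.ff1 s t :=
        funext fun t => (((hd1 t).const_mul ga).add_const (Stmt12Aux.ff s y)).deriv
      simp only []
      rw [h1]
      exact ((hd2 x).const_mul ga).deriv
    have hpyy : pyy (fun x y => ga * Stmt12Aux.ff s x + Stmt12Aux.ff s y) x y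
        = Stmt12Aux.ff2 s y := by
      unfold pyy
      have h1 : (fun t => deriv (fun u => ga * Stmt12Aux.ff s x + Stmt12Aux.ff s u) t)
          = fun t => Stmt12Aux.ff1 s t :=
        funext fun t => ((hd1 t).const_add (ga * Stmt12Aux.ff s x)).deriv
      simp only []
      rw [h1]
      exact (hd2 y).deriv
    have hpxy : pxy (fun x y => ga * Stmt12Aux.ff s x + Stmt12Aux.ff s y) x y = 0 := by
      unfold pxy
      have h1 : (fun t => deriv (fun u => ga * Stmt12Aux.ff s u + Stmt12Aux.ff s t) x)
          = fun _ => ga * Stmt12Aux.ff1 s x :=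
        funext fun t => (((hd1 x).const_mul ga).add_const (Stmt12Aux.ff s t)).deriv
      simp only []
      rw [h1]
      exact deriv_const y _
    have key : ∀ t : ℝ,
        lam * min (Stmt12Aux.ff2 s t) 0 + Lam * max (Stmt12Aux.ff2 s t) 0
          = -(lam * Stmt12Aux.ff s t) := by
      intro t
      have hid := Stmt12Aux.ff2_ident hs t
      rw [hs2] at hid
      rcases le_or_gt 0 (Stmt12Aux.ff s t) with h | h
      · have h2 : Stmt12Aux.ff2 s t = -Stmt12Aux.ff s t := by
          rw [hid, min_eq_right h, max_eq_left h]; ring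
        rw [h2, min_eq_left (by linarith), max_eq_right (by linarith)]
        ring
      · have h2 : Stmt12Aux.ff2 s t = -(Stmt12Aux.ff s t) / om := by
          rw [hid, max_eq_right h.le, min_eq_left h.le]; ring
        have hpos : 0 < -(Stmt12Aux.ff s t) / om := div_pos (by linarith) hompos
        rw [h2, min_eq_right hpos.le, max_eq_left hpos.le, hom]
        have hl : Lam ≠ 0 := ne_of_gt hLam0
        field_simp
        ring
    have hgam : lam * min (ga * Stmt12Aux.ff2 s x) 0 + Lam * max (ga * Stmt12Aux.ff2 s x) 0
        = ga * (lam * min (Stmt12Aux.ff2 s x) 0 + Lam * max (Stmt12Aux.ff2 s x) 0) := by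
      rw [show (0:ℝ) = ga * 0 from (mul_zero ga).symm,
        ← mul_min_of_nonneg _ _ hga.le, ← mul_max_of_nonneg _ _ hga.le]
      ring
    simp only [hpxx, hpyy, hpxy]
    rw [Stmt12Aux.pucci_diag]
    have kx := key x
    have ky := key y
    rw [hgam]
    nlinarith [kx, ky]
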